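/- For every real α and every n ∈ ℕ with n ≥ 1, the polynomial identity x² · L_{n−1}^{(α+3)}(x) = −n(x + α + 2) · L_n^{(α)}(x) + ((α + 2)(α + 1) − n·x) · L_{n−1}^{(α+1)}(x) holds in ℝ[x]. -/
import Mathlib


open Polynomial

lemma laguerre_aux_prod_shift1 (α : ℝ) (a b : ℕ) :
    ∏ j ∈ Finset.Icc a b, (α + 1 + (j : ℝ)) = ∏ j ∈ Finset.Icc (a + 1) (b + 1), (α + (j : ℝ)) := by
  rw [← Finset.map_add_right_Icc a b 1, Finset.prod_map]
  apply Finset.prod_congr rfl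
  intro x _
  simp only [addRightEmbedding_apply]
  push_cast
  ring

lemma laguerre_aux_prod_shift3 (α : ℝ) (a b : ℕ) :
    ∏ j ∈ Finset.Icc a b, (α + 3 + (j : ℝ)) = ∏ j ∈ Finset.Icc (a + 3) (b + 3), (α + (j : ℝ)) := by
  calc ∏ j ∈ Finset.Icc a b, (α + 3 + (j : ℝ))
      = ∏ j ∈ Finset.Icc a b, ((α + 2) + 1 + (j : ℝ)) := by
        apply Finset.prod_congr rfl; intros; ring
    _ = ∏ j ∈ Finset.Icc (a+1) (b+1), ((α + 1) + 1 + (j : ℝ)) := by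
        rw [laguerre_aux_prod_shift1]; apply Finset.prod_congr rfl; intros; ring
    _ = ∏ j ∈ Finset.Icc (a+1+1) (b+1+1), (α + 1 + (j : ℝ)) := by rw [laguerre_aux_prod_shift1]
    _ = ∏ j ∈ Finset.Icc (a+1+1+1) (b+1+1+1), (α + (j : ℝ)) := by rw [laguerre_aux_prod_shift1]
    _ = ∏ j ∈ Finset.Icc (a+3) (b+3), (α + (j : ℝ)) := by norm_num

lemma laguerre_aux_prod_Icc_bot (f : ℕ → ℝ) (a b : ℕ) (h : a ≤ b) :
    ∏ j ∈ Finset.Icc a b, f j = f a * ∏ j ∈ Finset.Icc (a + 1) b, f j := by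
  rw [← Finset.Ico_add_one_right_eq_Icc, ← Finset.Ico_add_one_right_eq_Icc,
    Finset.prod_eq_prod_Ico_succ_bot (by omega) f]

/-- The generalized Laguerre polynomial `L_n^{(α)}(x) =
∑_{k=0}^{n} (−1)^k [∏_{j=k+1}^{n}(α+j)] / ((n−k)!·k!) · x^k`. -/
noncomputable def laguerre (α : ℝ) (n : ℕ) : Polynomial ℝ :=
  ∑ k ∈ Finset.range (n + 1),
    Polynomial.C ((-1 : ℝ) ^ k * (∏ j ∈ Finset.Icc (k + 1) n, (α + (j : ℝ))) /
      ((n - k).factorial * k.factorial)) * Polynomial.X ^ k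

lemma laguerre_coeff (α : ℝ) (n m : ℕ) :
    (laguerre α n).coeff m = if m ≤ n then
      (-1 : ℝ) ^ m * (∏ j ∈ Finset.Icc (m + 1) n, (α + (j : ℝ))) /
      ((n - m).factorial * m.factorial) else 0 := by
  unfold laguerre
  rw [Polynomial.finset_sum_coeff]
  simp only [Polynomial.coeff_C_mul, Polynomial.coeff_X_pow]
  split_ifs with h
  · rw [Finset.sum_eq_single m]
    · simp
    · intro b _ hb
      simp [Ne.symm hb]
    · intro hm
      simp [Finset.mem_range] at hm
      omega
  · apply Finset.sum_eq_zero
    intro k hk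
    simp only [Finset.mem_range] at hk
    rw [if_neg (by omega)]
    simp

theorem laguerre_mixed_recurrence_deg_pred_param_three (α : ℝ) (n : ℕ) (hn : 1 ≤ n) :
    Polynomial.X ^ 2 * laguerre (α + 3) (n - 1) =
      -(Polynomial.C (n : ℝ)) * (Polynomial.X + Polynomial.C (α + 2)) * laguerre α n +
        (Polynomial.C ((α + 2) * (α + 1)) - Polynomial.C (n : ℝ) * Polynomial.X) *
          laguerre (α + 1) (n - 1) := by
  obtain ⟨N, rfl⟩ : ∃ N, n = N + 1 := ⟨n - 1, by omega⟩
  simp only [Nat.add_sub_cancel]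
  have main : Polynomial.X ^ 2 * laguerre (α + 3) N =
      Polynomial.C ((α + 2) * (α + 1)) * laguerre (α + 1) N
      - Polynomial.C (((N : ℝ) + 1) * (α + 2)) * laguerre α (N + 1)
      - Polynomial.C ((N : ℝ) + 1) * (Polynomial.X * laguerre α (N + 1))
      - Polynomial.C ((N : ℝ) + 1) * (Polynomial.X * laguerre (α + 1) N) := by
    ext m
    simp only [Polynomial.coeff_sub, Polynomial.coeff_C_mul]
    match m with
    | 0 =>
      rw [show (Polynomial.X : ℝ[X]) ^ 2 * laguerre (α + 3) N =
        Polynomial.X * (Polynomial.X * laguerre (α + 3) N) from by ring]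
      simp only [Polynomial.mul_coeff_zero, Polynomial.coeff_X_zero, zero_mul, mul_zero,
        laguerre_coeff, if_pos (Nat.zero_le _)]
      rw [laguerre_aux_prod_shift1,
        laguerre_aux_prod_Icc_bot (fun j => α + (j : ℝ)) 1 (N+1) (by omega)]
      have h1 : (N.factorial : ℝ) ≠ 0 := by positivity
      simp only [Nat.sub_zero, Nat.factorial_succ]
      push_cast
      field_simp
      ring
    | 1 =>
      rw [show (Polynomial.X : ℝ[X]) ^ 2 * laguerre (α + 3) N =
        Polynomial.X * (Polynomial.X * laguerre (α + 3) N) from by ring]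
      rw [Polynomial.coeff_X_mul, Polynomial.coeff_X_mul, Polynomial.coeff_X_mul]
      simp only [Polynomial.mul_coeff_zero, Polynomial.coeff_X_zero, zero_mul, laguerre_coeff]
      rcases N with _ | M
      · rw [if_neg (by omega), if_pos (by omega), if_pos (by omega), if_pos (by omega)]
        simp [Finset.Icc_self]
        ring
      · rw [laguerre_aux_prod_shift1, laguerre_aux_prod_shift1]
        simp only [show M + 1 - 1 = M from by omega, show M + 1 + 1 - 1 = M + 1 from by omega,
          show M + 1 + 1 - 0 = M + 2 from by omega, show M + 1 - 0 = M + 1 from by omega]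
        simp only [show (1:ℕ) + 1 + 1 = 3 from by omega, show M + 1 + 1 = M + 2 from by omega,
          show (0:ℕ) + 1 + 1 = 2 from by omega, show (1:ℕ) + 1 = 2 from by omega,
          show (0:ℕ) + 1 = 1 from by omega]
        rw [laguerre_aux_prod_Icc_bot (fun j => α + (j : ℝ)) 1 (M+2) (by omega),
          laguerre_aux_prod_Icc_bot (fun j => α + (j : ℝ)) 2 (M+2) (by omega)]
        have h1 : (M.factorial : ℝ) ≠ 0 := by positivity
        simp only [Nat.factorial_succ, Nat.factorial_one, Nat.factorial_zero]
        push_cast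
        field_simp
        ring
    | (k + 2) =>
      rw [Polynomial.coeff_X_pow_mul, Polynomial.coeff_X_mul, Polynomial.coeff_X_mul]
      simp only [laguerre_coeff]
      by_cases h1 : k + 2 ≤ N
      · obtain ⟨d, rfl⟩ : ∃ d, N = k + 2 + d := ⟨N - (k + 2), by omega⟩
        rw [if_pos (by omega), if_pos (by omega), if_pos (by omega), if_pos (by omega),
          if_pos (by omega)]
        rw [laguerre_aux_prod_shift3, laguerre_aux_prod_shift1, laguerre_aux_prod_shift1]
        simp only [show k + 2 + d - k = d + 2 from by omega,
          show k + 2 + d + 1 - (k + 2) = d + 1 from by omega,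
          show k + 2 + d + 1 - (k + 1) = d + 2 from by omega,
          show k + 2 + d - (k + 2) = d from by omega,
          show k + 2 + d - (k + 1) = d + 1 from by omega]
        simp only [show k + 1 + 3 = k + 4 from by omega,
          show k + 2 + d + 3 = k + d + 5 from by omega,
          show k + 2 + 1 + 1 = k + 4 from by omega, show k + 2 + d + 1 = k + d + 3 from by omega,
          show k + 1 + 1 + 1 = k + 3 from by omega, show k + 2 + 1 = k + 3 from by omega,
          show k + 1 + 1 = k + 2 from by omega]
        rw [show k + d + 5 = (k + d + 4) + 1 from by omega,
          Finset.prod_Icc_succ_top (by omega),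
          show k + d + 4 = (k + d + 3) + 1 from by omega,
          Finset.prod_Icc_succ_top (by omega)]
        rw [laguerre_aux_prod_Icc_bot (fun j => α + (j : ℝ)) (k + 2) (k + d + 3) (by omega),
          laguerre_aux_prod_Icc_bot (fun j => α + (j : ℝ)) (k + 3) (k + d + 3) (by omega)]
        simp only [Nat.factorial_succ]
        have h2 : (d.factorial : ℝ) ≠ 0 := by positivity
        have h3 : (k.factorial : ℝ) ≠ 0 := by positivity
        push_cast
        field_simp
        ring
      · by_cases h2 : k + 1 ≤ N
        · obtain rfl : N = k + 1 := by omega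
          rw [if_pos (by omega), if_neg (by omega), if_pos (by omega), if_pos (by omega),
            if_pos (by omega)]
          rw [Finset.Icc_self, Finset.prod_singleton,
            Finset.Icc_eq_empty (show ¬(k+2+1 ≤ k+1+1) from by omega), Finset.prod_empty,
            Finset.Icc_eq_empty (show ¬(k+1+1 ≤ k+1) from by omega), Finset.prod_empty,
            Finset.Icc_self, Finset.prod_singleton]
          simp only [show k + 1 - k = 1 from by omega,
            show k + 1 + 1 - (k + 2) = 0 from by omega,
            show k + 1 + 1 - (k + 1) = 1 from by omega, show k + 1 - (k + 1) = 0 from by omega,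
            Nat.factorial_succ, Nat.factorial_one, Nat.factorial_zero]
          have h3 : (k.factorial : ℝ) ≠ 0 := by positivity
          push_cast
          field_simp
          ring
        · by_cases h3 : k ≤ N
          · obtain rfl : k = N := by omega
            rw [if_pos (by omega), if_neg (by omega), if_neg (by omega), if_pos (by omega),
              if_neg (by omega)]
            rw [Finset.Icc_eq_empty (show ¬(k+1 ≤ k) from by omega), Finset.prod_empty,
              Finset.Icc_eq_empty (show ¬(k+1+1 ≤ k+1) from by omega), Finset.prod_empty]
            simp only [show k - k = 0 from by omega, show k + 1 - (k + 1) = 0 from by omega,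
              Nat.factorial_succ, Nat.factorial_zero]
            have h4 : (k.factorial : ℝ) ≠ 0 := by positivity
            push_cast
            field_simp
            ring
          · rw [if_neg (by omega), if_neg (by omega), if_neg (by omega), if_neg (by omega),
              if_neg (by omega)]
            ring
  rw [main]
  push_cast
  simp only [map_mul, map_add]
  ring
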